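/- Let m ≥ 1 and i ≥ 2 be integers. Let (Ω, F, ℙ) be a probability space with a filtration (F_t)_{t≥i} and let (d_t)_{t≥i} be an adapted, nonnegative process with d_t ≤ 2mt almost surely, such that for all sufficiently large t, E[exp((d_{t+1} - d_t)/ln(t+1)) | F_t] ≤ exp(m·c_t·(e^{1/ln(t+1)} - 1)) almost surely, and such that there exist M > 0 and T₀ ≥ i with E[d_t] ≤ M·ln t for all t ≥ T₀. Let γ : ℕ → (0,∞) satisfy γ(t) → ∞ and (∑_{j=2}^{t} 1/(j·ln j)) / γ(t) → 0 as t → ∞. Then for every constant κ > 1, ℙ(d_t ≥ κ·γ(t)·ln t) → 0 as t → ∞; that is, d_t ≤ κ·γ(t)·ln t with high probability. -/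

import Mathlib

open Filter MeasureTheory

/-- `c_l = (2ml+1)/(l(2ml+1-2m))`. -/
noncomputable def cPAAPA (m l : ℕ) : ℝ :=
  (2 * (m : ℝ) * l + 1) / ((l : ℝ) * (2 * (m : ℝ) * l + 1 - 2 * m))

/-- Theorem 3.12 of the paper: in the pure anti-preferential attachment model, if
`γ(t) → ∞` and `(∑_{j=2}^t 1/(j ln j))/γ(t) → 0`, then for every `κ > 1` the degree
process satisfies `d_t ≤ κ γ(t) ln t` with high probability as `t → ∞`. -/
theorem pa_apa_pure_anti_whp_bound
    {Ω : Type*} {m0 : MeasurableSpace Ω} (μ : Measure Ω) [IsProbabilityMeasure μ]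
    (ℱ : Filtration ℕ m0) (m i : ℕ) (hm : 1 ≤ m) (hi : 2 ≤ i)
    (d : ℕ → Ω → ℝ) (hadapted : Adapted ℱ d)
    (hnonneg : ∀ t, i ≤ t → 0 ≤ᵐ[μ] d t)
    (hbound : ∀ t, i ≤ t → ∀ᵐ ω ∂μ, d t ω ≤ 2 * (m : ℝ) * t)
    (hmgf : ∀ᶠ t : ℕ in atTop,
      μ[fun ω => Real.exp ((d (t + 1) ω - d t ω) / Real.log (t + 1)) | ℱ t] ≤ᵐ[μ]
        fun _ => Real.exp ((m : ℝ) * cPAAPA m t * (Real.exp (1 / Real.log (t + 1)) - 1)))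
    (M : ℝ) (hM : 0 < M) (T₀ : ℕ) (hT₀ : i ≤ T₀)
    (hEd : ∀ t, T₀ ≤ t → ∫ ω, d t ω ∂μ ≤ M * Real.log t)
    (γ : ℕ → ℝ) (hγpos : ∀ t, 0 < γ t)
    (hγ : Tendsto γ atTop atTop)
    (hγratio : Tendsto
      (fun t : ℕ => (∑ j ∈ Finset.Icc 2 t, 1 / ((j : ℝ) * Real.log j)) / γ t)
      atTop (nhds 0)) :
    ∀ κ : ℝ, 1 < κ →
      Tendsto (fun t : ℕ => μ {ω | κ * γ t * Real.log t ≤ d t ω})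
        atTop (nhds 0) := by
  intro κ hκ
  have hκ0 : (0:ℝ) < κ := lt_trans one_pos hκ
  have hupper : ∀ᶠ t : ℕ in atTop,
      μ {ω | κ * γ t * Real.log t ≤ d t ω} ≤ ENNReal.ofReal (M / (κ * γ t)) := by
    filter_upwards [eventually_ge_atTop (max T₀ 3)] with t ht
    have htT : T₀ ≤ t := le_trans (le_max_left _ _) ht
    have ht3 : (3:ℕ) ≤ t := le_trans (le_max_right _ _) ht
    have hit : i ≤ t := le_trans hT₀ htT
    have ht1 : (1:ℝ) < (t:ℝ) := by exact_mod_cast lt_of_lt_of_le (by norm_num) ht3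
    have hlog : 0 < Real.log t := Real.log_pos ht1
    have hγt : 0 < γ t := hγpos t
    have hε : 0 < κ * γ t * Real.log t := by positivity
    have hmeas : AEStronglyMeasurable (d t) μ :=
      ((hadapted t).mono (ℱ.le t) le_rfl).aestronglyMeasurable
    have hint : Integrable (d t) μ := by
      refine Integrable.mono' (integrable_const (2 * (m:ℝ) * t)) hmeas ?_
      filter_upwards [hnonneg t hit, hbound t hit] with ω h0 h1
      rw [Real.norm_eq_abs, abs_of_nonneg h0]; exact h1
    have hmark := mul_meas_ge_le_integral_of_nonneg (hnonneg t hit) hint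
      (κ * γ t * Real.log t)
    have hfin : μ {ω | κ * γ t * Real.log t ≤ d t ω} ≠ ⊤ :=
      (measure_lt_top μ _).ne
    have htoReal : (μ {ω | κ * γ t * Real.log t ≤ d t ω}).toReal
        ≤ M / (κ * γ t) := by
      have h1 : (μ {ω | κ * γ t * Real.log t ≤ d t ω}).toReal
          ≤ (M * Real.log t) / (κ * γ t * Real.log t) := by
        rw [le_div_iff₀ hε, mul_comm]
        exact le_trans hmark (hEd t htT)
      have h2 : (M * Real.log t) / (κ * γ t * Real.log t) = M / (κ * γ t) := by
        field_simp
      rw [h2] at h1; exact h1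
    calc μ {ω | κ * γ t * Real.log t ≤ d t ω}
        = ENNReal.ofReal (μ {ω | κ * γ t * Real.log t ≤ d t ω}).toReal :=
          (ENNReal.ofReal_toReal hfin).symm
      _ ≤ ENNReal.ofReal (M / (κ * γ t)) := ENNReal.ofReal_le_ofReal htoReal
  have hlim : Tendsto (fun t : ℕ => ENNReal.ofReal (M / (κ * γ t))) atTop (nhds 0) := by
    have h1 : Tendsto (fun t : ℕ => M / (κ * γ t)) atTop (nhds 0) := by
      have h2 : Tendsto (fun t : ℕ => κ * γ t) atTop atTop :=
        (tendsto_const_mul_atTop_of_pos hκ0).mpr hγ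
      simpa [div_eq_mul_inv] using (h2.inv_tendsto_atTop).const_mul M
    have := (ENNReal.continuous_ofReal.tendsto 0).comp h1
    simpa [Function.comp_def] using this
  exact tendsto_of_tendsto_of_tendsto_of_le_of_le' tendsto_const_nhds hlim
    (Eventually.of_forall fun t => zero_le) hupper
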